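/- Let 𝔤 be a finite-dimensional Lie algebra over an algebraically closed field of characteristic zero, 𝔥 a commutative ideal, X ⊆ 𝔤* a closed irreducible G-invariant subvariety, 𝔵_𝔥 ⊆ 𝔥* its image under restriction, and K = F(𝔵_𝔥). Define ĝ = {ξ ∈ 𝔤⊗K : [ξ,𝔥] vanishes on 𝔵_𝔥} and ĥ = {ξ ∈ 𝔥⊗K : α(ξ(α)) = 0 for all α ∈ 𝔵_𝔥 where defined}. Then 𝔥⊗K is an ideal of ĝ, ĥ is an ideal of ĝ, and for generic α ∈ 𝔵_𝔥 the evaluation ĝ(α) := {ξ(α) : ξ ∈ ĝ, ξ defined at α} equals the stabilizer 𝔤_α = {x ∈ 𝔤 : α([x,𝔥]) = 0}. -/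

import Mathlib

open MvPolynomial
open scoped TensorProduct

variable {F : Type*} [Field F]

/-- Linear polynomial (coordinate expression of a vector). -/
noncomputable def linPoly {ι M : Type*} [Fintype ι] [AddCommGroup M] [Module F M]
    (b : Module.Basis ι F M) (v : M) : MvPolynomial ι F :=
  ∑ i, MvPolynomial.C (b.repr v i) * MvPolynomial.X i

lemma aeval_apply_eq_eval {κ : Type*} (f : κ → F) (p : MvPolynomial κ F) :
    MvPolynomial.aeval f p = MvPolynomial.eval f p := by
  rw [← MvPolynomial.coe_aeval_eq_eval]; rfl

lemma linPoly_add {ι M : Type*} [Fintype ι] [AddCommGroup M] [Module F M]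
    (b : Module.Basis ι F M) (v w : M) :
    linPoly b (v + w) = linPoly b v + linPoly b w := by
  simp [linPoly, add_mul, Finset.sum_add_distrib]

lemma linPoly_smul {ι M : Type*} [Fintype ι] [AddCommGroup M] [Module F M]
    (b : Module.Basis ι F M) (c : F) (v : M) :
    linPoly b (c • v) = MvPolynomial.C c * linPoly b v := by
  simp [linPoly, Finset.mul_sum, mul_assoc]

lemma eval_linPoly {ι M : Type*} [Fintype ι] [AddCommGroup M] [Module F M]
    (b : Module.Basis ι F M) (α : Module.Dual F M) (v : M) :
    MvPolynomial.eval (fun i => α (b i)) (linPoly b v) = α v := by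
  conv_rhs => rw [← b.sum_repr v]
  rw [map_sum, linPoly, map_sum]
  refine Finset.sum_congr rfl fun i _ => ?_
  rw [map_mul, MvPolynomial.eval_C, MvPolynomial.eval_X, map_smul, smul_eq_mul]

def brIdeal {g : Type*} [LieRing g] [LieAlgebra F g] (hI : LieIdeal F g)
    (x : g) (h : ↥hI) : ↥hI := ⟨⁅x, (h : g)⁆, hI.lie_mem h.2⟩

lemma brIdeal_add_left {g : Type*} [LieRing g] [LieAlgebra F g] (hI : LieIdeal F g)
    (x y : g) (h : ↥hI) : brIdeal hI (x + y) h = brIdeal hI x h + brIdeal hI y h :=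
  Subtype.ext (add_lie x y (h : g))

lemma brIdeal_smul_left {g : Type*} [LieRing g] [LieAlgebra F g] (hI : LieIdeal F g)
    (c : F) (x : g) (h : ↥hI) : brIdeal hI (c • x) h = c • brIdeal hI x h :=
  Subtype.ext (smul_lie c x (h : g))

lemma brIdeal_add_right {g : Type*} [LieRing g] [LieAlgebra F g] (hI : LieIdeal F g)
    (x : g) (h₁ h₂ : ↥hI) : brIdeal hI x (h₁ + h₂) = brIdeal hI x h₁ + brIdeal hI x h₂ :=
  Subtype.ext (lie_add x (h₁ : g) (h₂ : g))

lemma brIdeal_smul_right {g : Type*} [LieRing g] [LieAlgebra F g] (hI : LieIdeal F g)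
    (c : F) (x : g) (h : ↥hI) : brIdeal hI x (c • h) = c • brIdeal hI x h :=
  Subtype.ext (lie_smul c x (h : g))

/-- The linear map `x ↦ ⁅x, h⁆ ∈ 𝔥`. -/
def brL {g : Type*} [LieRing g] [LieAlgebra F g] (hI : LieIdeal F g) (h : ↥hI) :
    g →ₗ[F] ↥hI where
  toFun x := brIdeal hI x h
  map_add' x y := brIdeal_add_left hI x y h
  map_smul' c x := brIdeal_smul_left hI c x h

/-- `Ψ_h (p ⊗ x) = p · linPoly(⁅x,h⁆)`. -/
noncomputable def Psi {g : Type*} [LieRing g] [LieAlgebra F g] (hI : LieIdeal F g)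
    {κ : Type*} [Fintype κ] (bh : Module.Basis κ F ↥hI) (h : ↥hI) :
    MvPolynomial κ F ⊗[F] g →ₗ[F] MvPolynomial κ F :=
  TensorProduct.lift (LinearMap.mk₂ F (fun p x => p * linPoly bh (brIdeal hI x h))
    (fun p p' _ => by rw [add_mul])
    (fun c p x => by rw [smul_mul_assoc])
    (fun p x y => by rw [brIdeal_add_left, linPoly_add, mul_add])
    (fun c p x => by
      rw [brIdeal_smul_left, linPoly_smul, MvPolynomial.smul_eq_C_mul]; ring))

lemma Psi_tmul {g : Type*} [LieRing g] [LieAlgebra F g] (hI : LieIdeal F g)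
    {κ : Type*} [Fintype κ] (bh : Module.Basis κ F ↥hI) (h : ↥hI) (p : MvPolynomial κ F) (x : g) :
    Psi hI bh h (p ⊗ₜ[F] x) = p * linPoly bh (brIdeal hI x h) := rfl

lemma Psi_add_h {g : Type*} [LieRing g] [LieAlgebra F g] (hI : LieIdeal F g)
    {κ : Type*} [Fintype κ] (bh : Module.Basis κ F ↥hI) (h₁ h₂ : ↥hI)
    (w : MvPolynomial κ F ⊗[F] g) :
    Psi hI bh (h₁ + h₂) w = Psi hI bh h₁ w + Psi hI bh h₂ w := by
  induction w using TensorProduct.induction_on with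
  | zero => simp
  | tmul p x => rw [Psi_tmul, Psi_tmul, Psi_tmul, brIdeal_add_right, linPoly_add, mul_add]
  | add a c ha hc => rw [map_add, map_add, map_add, ha, hc]; ring

lemma Psi_smul_h {g : Type*} [LieRing g] [LieAlgebra F g] (hI : LieIdeal F g)
    {κ : Type*} [Fintype κ] (bh : Module.Basis κ F ↥hI) (c : F) (h : ↥hI)
    (w : MvPolynomial κ F ⊗[F] g) :
    Psi hI bh (c • h) w = MvPolynomial.C c * Psi hI bh h w := by
  induction w using TensorProduct.induction_on with
  | zero => simp
  | tmul p x => rw [Psi_tmul, Psi_tmul, brIdeal_smul_right, linPoly_smul]; ring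
  | add a d ha hd => rw [map_add, map_add, ha, hd]; ring

/-- The linear map `h ↦ Ψ_h w`. -/
noncomputable def PsiL {g : Type*} [LieRing g] [LieAlgebra F g] (hI : LieIdeal F g)
    {κ : Type*} [Fintype κ] (bh : Module.Basis κ F ↥hI) (w : MvPolynomial κ F ⊗[F] g) :
    ↥hI →ₗ[F] MvPolynomial κ F where
  toFun h := Psi hI bh h w
  map_add' h₁ h₂ := Psi_add_h hI bh h₁ h₂ w
  map_smul' c h := by
    rw [Psi_smul_h hI bh c h w, RingHom.id_apply, MvPolynomial.smul_eq_C_mul]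

lemma C1_lemma {g : Type*} [LieRing g] [LieAlgebra F g]
    {κ : Type*} [Fintype κ]
    (hI : LieIdeal F g) (bh : Module.Basis κ F ↥hI)
    {K : Type*} [Field K] [Algebra F K]
    (toK : MvPolynomial κ F →ₐ[F] K)
    (εK : (K ⊗[F] g) →ₗ[K] K)
    (hεK : ∀ h : ↥hI, εK ((1 : K) ⊗ₜ[F] (h : g)) = toK (linPoly bh h))
    (h : ↥hI) (w : MvPolynomial κ F ⊗[F] g) :
    εK ⁅TensorProduct.map toK.toLinearMap LinearMap.id w,
        ((1 : K) ⊗ₜ[F] ((h : g)) : K ⊗[F] g)⁆ = toK (Psi hI bh h w) := by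
  induction w using TensorProduct.induction_on with
  | zero => simp
  | tmul p x =>
      rw [TensorProduct.map_tmul]
      simp only [AlgHom.toLinearMap_apply, LinearMap.id_coe, id_eq]
      have hb : ⁅(toK p) ⊗ₜ[F] x, ((1 : K) ⊗ₜ[F] ((h : g)) : K ⊗[F] g)⁆
          = (toK p * 1) ⊗ₜ[F] ⁅x, (h : g)⁆ := rfl
      rw [hb, mul_one]
      have hsm : (toK p) ⊗ₜ[F] ⁅x, (h : g)⁆
          = toK p • (((1 : K) ⊗ₜ[F] ⁅x, (h : g)⁆ : K ⊗[F] g)) := by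
        rw [TensorProduct.smul_tmul', smul_eq_mul, mul_one]
      rw [hsm, map_smul, smul_eq_mul]
      have : ⁅x, (h : g)⁆ = ((brIdeal hI x h : ↥hI) : g) := rfl
      rw [this, hεK (brIdeal hI x h), Psi_tmul, map_mul]
  | add a c ha hc => rw [map_add, add_lie, map_add, ha, hc, ← map_add, map_add (Psi hI bh h) a c]

lemma C2_lemma {g : Type*} [LieRing g] [LieAlgebra F g]
    {κ : Type*} [Fintype κ]
    (hI : LieIdeal F g) (bh : Module.Basis κ F ↥hI)
    (α : Module.Dual F ↥hI) (h : ↥hI) (w : MvPolynomial κ F ⊗[F] g) :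
    MvPolynomial.eval (fun k => α (bh k)) (Psi hI bh h w)
      = α (brIdeal hI (TensorProduct.lift ((LinearMap.lsmul F g).comp
          (MvPolynomial.aeval (fun k => α (bh k)) :
            MvPolynomial κ F →ₐ[F] F).toLinearMap) w) h) := by
  induction w using TensorProduct.induction_on with
  | zero =>
      simp only [map_zero]
      rw [show brIdeal hI 0 h = 0 from Subtype.ext (zero_lie _), map_zero]
  | tmul p x =>
      rw [Psi_tmul, map_mul, eval_linPoly, TensorProduct.lift.tmul]
      simp only [LinearMap.comp_apply, AlgHom.toLinearMap_apply, LinearMap.lsmul_apply]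
      rw [aeval_apply_eq_eval, brIdeal_smul_left, map_smul, smul_eq_mul]
  | add a c ha hc =>
      simp only [map_add, brIdeal_add_left]
      rw [ha, hc]


lemma common_denom {R : Type*} [CommRing R] {K : Type*} [Field K]
    (toK : R →+* K) (I₀ : Ideal R)
    (hker : ∀ f : R, toK f = 0 ↔ f ∈ I₀)
    (hfrac : ∀ x : K, ∃ p q : R, q ∉ I₀ ∧ x * toK q = toK p)
    {E : Type*} [Fintype E] [DecidableEq E] (v : E → K) :
    ∃ s ∉ I₀, ∃ P : E → R, ∀ e, v e * toK s = toK (P e) := by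
  choose p q hq heq using fun e => hfrac (v e)
  refine ⟨∏ e, q e, fun hmem => ?_, fun e => p e * ∏ e' ∈ Finset.univ.erase e, q e', fun e => ?_⟩
  · have h0 : toK (∏ e, q e) = 0 := (hker _).mpr hmem
    rw [map_prod] at h0
    obtain ⟨e, _, he⟩ := Finset.prod_eq_zero_iff.mp h0
    exact hq e ((hker _).mp he)
  · calc v e * toK (∏ e', q e')
        = v e * (toK (q e) * toK (∏ e' ∈ Finset.univ.erase e, q e')) := by
          rw [← Finset.mul_prod_erase Finset.univ q (Finset.mem_univ e), map_mul]
      _ = (v e * toK (q e)) * toK (∏ e' ∈ Finset.univ.erase e, q e') := by ring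
      _ = toK (p e) * toK (∏ e' ∈ Finset.univ.erase e, q e') := by rw [heq e]
      _ = toK (p e * ∏ e' ∈ Finset.univ.erase e, q e') := (map_mul _ _ _).symm

lemma matrix_splitting {R : Type*} [CommRing R] {K : Type*} [Field K]
    (toK : R →+* K) (I₀ : Ideal R)
    (hker : ∀ f : R, toK f = 0 ↔ f ∈ I₀)
    (hfrac : ∀ x : K, ∃ p q : R, q ∉ I₀ ∧ x * toK q = toK p)
    {ι κ : Type*} [Fintype ι] [DecidableEq ι] [Fintype κ] [DecidableEq κ]
    (M : Matrix κ ι R) :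
    ∃ s ∉ I₀, ∃ B : Matrix ι ι R, ∃ H : Matrix ι κ R,
      (∀ k j, (M * B) k j ∈ I₀) ∧
      (∀ i j, B i j + (H * M) i j - (if i = j then s else 0) ∈ I₀) := by
  classical
  set A : Matrix κ ι K := M.map toK with hA
  set f : (ι → K) →ₗ[K] (κ → K) := Matrix.toLin' A with hf
  obtain ⟨Tc, hTc⟩ := (LinearMap.ker f).exists_isCompl
  set P : (ι → K) →ₗ[K] (ι → K) :=
    (LinearMap.ker f).subtype ∘ₗ (LinearMap.ker f).linearProjOfIsCompl Tc hTc with hP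
  have hPmem : ∀ v, P v ∈ LinearMap.ker f := fun v => ((LinearMap.ker f).linearProjOfIsCompl Tc hTc v).2
  have hPfix : ∀ v ∈ LinearMap.ker f, P v = v := by
    intro v hv
    have := Submodule.linearProjOfIsCompl_apply_left hTc ⟨v, hv⟩
    simp only [hP, LinearMap.comp_apply, Submodule.subtype_apply]
    exact congrArg Subtype.val this
  have hfP : f ∘ₗ P = 0 := by
    apply LinearMap.ext
    intro v
    have := hPmem v
    rw [LinearMap.mem_ker] at this
    simp [LinearMap.comp_apply, this]
  have hle : LinearMap.ker f ≤ LinearMap.ker (LinearMap.id - P) := by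
    intro v hv
    simp [LinearMap.mem_ker, hPfix v hv]
  set g1 : ((ι → K) ⧸ LinearMap.ker f) →ₗ[K] (ι → K) :=
    (LinearMap.ker f).liftQ (LinearMap.id - P) hle with hg1
  obtain ⟨Rc, hRc⟩ := (LinearMap.range f).exists_isCompl
  set Hmap : (κ → K) →ₗ[K] (ι → K) :=
    g1 ∘ₗ (f.quotKerEquivRange.symm : (LinearMap.range f) →ₗ[K] _) ∘ₗ
      (LinearMap.range f).linearProjOfIsCompl Rc hRc with hHmap
  have key : Hmap ∘ₗ f = LinearMap.id - P := by
    apply LinearMap.ext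
    intro v
    have h1 : (LinearMap.range f).linearProjOfIsCompl Rc hRc (f v) = ⟨f v, ⟨v, rfl⟩⟩ :=
      Submodule.linearProjOfIsCompl_apply_left hRc ⟨f v, ⟨v, rfl⟩⟩
    have h2 : f.quotKerEquivRange.symm ⟨f v, ⟨v, rfl⟩⟩ = Submodule.Quotient.mk v := by
      rw [LinearEquiv.symm_apply_eq]
      exact Subtype.ext (f.quotKerEquivRange_apply_mk v).symm
    simp only [LinearMap.comp_apply, hHmap, h1, LinearEquiv.coe_coe, h2, hg1,
      Submodule.liftQ_apply]
  set BK : Matrix ι ι K := LinearMap.toMatrix' P with hBK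
  set HK : Matrix ι κ K := LinearMap.toMatrix' Hmap with hHK
  have eq1 : A * BK = 0 := by
    have h5 : LinearMap.toMatrix' (f ∘ₗ P) = A * BK := by
      rw [LinearMap.toMatrix'_comp, hf, LinearMap.toMatrix'_toLin']
    rw [hfP] at h5
    simpa using h5.symm
  have eq2 : BK + HK * A = 1 := by
    have h3 : LinearMap.toMatrix' (Hmap ∘ₗ f) = HK * A := by
      rw [LinearMap.toMatrix'_comp, hf, LinearMap.toMatrix'_toLin']
    have h4 : P + Hmap ∘ₗ f = LinearMap.id := by rw [key]; abel
    calc BK + HK * A = LinearMap.toMatrix' (P + Hmap ∘ₗ f) := by rw [map_add, h3]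
      _ = 1 := by rw [h4, LinearMap.toMatrix'_id]
  obtain ⟨s, hs, Pf, hPf⟩ := common_denom toK I₀ hker hfrac
    (Sum.elim (fun e : ι × ι => BK e.1 e.2) (fun e : ι × κ => HK e.1 e.2))
  set B : Matrix ι ι R := Matrix.of fun i j => Pf (.inl (i, j)) with hBdef
  set Hm : Matrix ι κ R := Matrix.of fun i k => Pf (.inr (i, k)) with hHdef
  have hB : ∀ i j, toK (B i j) = BK i j * toK s := fun i j => (hPf (.inl (i, j))).symm
  have hH : ∀ i k, toK (Hm i k) = HK i k * toK s := fun i k => (hPf (.inr (i, k))).symm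
  refine ⟨s, hs, B, Hm, fun k j => ?_, fun i j => ?_⟩
  · rw [← hker]
    have hMB : toK ((M * B) k j) = ∑ i, toK (M k i) * (BK i j * toK s) := by
      rw [Matrix.mul_apply, map_sum]
      exact Finset.sum_congr rfl fun i _ => by rw [map_mul, hB]
    rw [hMB]
    have h6 : ∑ i, toK (M k i) * (BK i j * toK s) = ((A * BK) k j) * toK s := by
      rw [Matrix.mul_apply, Finset.sum_mul]
      refine Finset.sum_congr rfl fun i _ => ?_
      rw [hA]
      simp only [Matrix.map_apply]
      ring
    rw [h6, eq1]
    simp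
  · rw [← hker]
    have hHM : toK ((Hm * M) i j) = ((HK * A) i j) * toK s := by
      rw [Matrix.mul_apply, map_sum, Matrix.mul_apply, Finset.sum_mul]
      refine Finset.sum_congr rfl fun k _ => ?_
      rw [map_mul, hH, hA]
      simp only [Matrix.map_apply]
      ring
    rw [map_sub, map_add, hB, hHM, ← add_mul]
    have h7 := congrFun (congrFun eq2 i) j
    rw [Matrix.add_apply] at h7
    rw [h7, apply_ite toK, map_zero, Matrix.one_apply]
    split <;> simp

noncomputable def kirillovBracket {ι g : Type*} [Fintype ι] [DecidableEq ι]
    [LieRing g] [LieAlgebra F g]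
    (b : Module.Basis ι F g) (f p : MvPolynomial ι F) : MvPolynomial ι F :=
  ∑ i, ∑ j, pderiv i f * pderiv j p * linPoly b ⁅b i, b j⁆

/-- For a commutative ideal 𝔥 of 𝔤, a closed irreducible
G-invariant X ⊆ 𝔤* (with prime Poisson ideal I), 𝔵_𝔥 its image in 𝔥*
(with ideal I₀ = ρ⁻¹(I)), and K = F(𝔵_𝔥):  𝔥⊗K is an ideal of
ĝ = {ξ ∈ 𝔤⊗K : [ξ,𝔥] vanishes on 𝔵_𝔥}, ĥ = {ξ ∈ 𝔥⊗K : α(ξ(α)) = 0} is an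
ideal of ĝ, and for generic α ∈ 𝔵_𝔥 the evaluation ĝ(α) equals the
stabilizer 𝔤_α = {x : α([x,𝔥]) = 0}. -/
theorem hat_ideals_and_generic_evaluation
    {F : Type*} [Field F] [CharZero F] [IsAlgClosed F]
    {g : Type*} [LieRing g] [LieAlgebra F g] [Module.Finite F g]
    {ι κ : Type*} [Fintype ι] [DecidableEq ι] [Fintype κ] [DecidableEq κ]
    (b : Module.Basis ι F g)
    (hI : LieIdeal F g)
    (hcomm : ∀ x ∈ hI, ∀ y ∈ hI, ⁅x, y⁆ = (0 : g))
    (bh : Module.Basis κ F ↥hI)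
    (I : Ideal (MvPolynomial ι F)) [I.IsPrime]
    (hIG : ∀ f ∈ I, ∀ p : MvPolynomial ι F, kirillovBracket b f p ∈ I) :
    -- I₀ = ρ⁻¹(I) where ρ : S(𝔥) → S(𝔤); K = F(𝔵_𝔥) = Frac(S(𝔥)/I₀)
    ∀ (I₀ : Ideal (MvPolynomial κ F)),
      I₀ = Ideal.comap
        (MvPolynomial.aeval (fun k => linPoly b ((bh k : ↥hI) : g)) :
          MvPolynomial κ F →ₐ[F] MvPolynomial ι F) I →
    ∀ (K : Type*) (_ : Field K) (_ : Algebra F K),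
    ∀ (toK : MvPolynomial κ F →ₐ[F] K),
      -- toK is the canonical map S(𝔥) → S(𝔥)/I₀ → K = F(𝔵_𝔥)
      (∀ f0 : MvPolynomial κ F, toK f0 = 0 ↔ f0 ∈ I₀) →
      (∀ fq : K, ∃ p q : MvPolynomial κ F, q ∉ I₀ ∧ fq * toK q = toK p) →
    ∀ (εK : (K ⊗[F] g) →ₗ[K] K),
      -- εK extends the tautological evaluation 𝔥 → K, h ↦ (α ↦ α(h))
      (∀ h : ↥hI, εK ((1 : K) ⊗ₜ[F] (h : g)) = toK (linPoly bh h)) →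
    -- (a) 𝔥⊗K is an ideal of ĝ
    ((∀ ξ : K ⊗[F] g,
        (∀ h ∈ hI, εK ⁅ξ, ((1 : K) ⊗ₜ[F] h : K ⊗[F] g)⁆ = 0) →
        ∀ w ∈ Submodule.span K {w : K ⊗[F] g | ∃ y ∈ hI, w = (1 : K) ⊗ₜ[F] y},
          ⁅ξ, w⁆ ∈ Submodule.span K
            {w : K ⊗[F] g | ∃ y ∈ hI, w = (1 : K) ⊗ₜ[F] y}) ∧
    -- (b) ĥ = (𝔥⊗K) ∩ ker εK is an ideal of ĝ
    (∀ ξ : K ⊗[F] g,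
        (∀ h ∈ hI, εK ⁅ξ, ((1 : K) ⊗ₜ[F] h : K ⊗[F] g)⁆ = 0) →
        ∀ w ∈ Submodule.span K {w : K ⊗[F] g | ∃ y ∈ hI, w = (1 : K) ⊗ₜ[F] y}
            ⊓ LinearMap.ker εK,
          ⁅ξ, w⁆ ∈ Submodule.span K
            {w : K ⊗[F] g | ∃ y ∈ hI, w = (1 : K) ⊗ₜ[F] y}
            ⊓ LinearMap.ker εK) ∧
    -- (c) for generic α ∈ 𝔵_𝔥, the evaluation ĝ(α) equals 𝔤_α
    (∃ q : MvPolynomial κ F, q ∉ I₀ ∧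
      ∀ α : Module.Dual F ↥hI,
        (∀ f0 ∈ I₀, MvPolynomial.eval (fun k => α (bh k)) f0 = 0) →
        MvPolynomial.eval (fun k => α (bh k)) q ≠ 0 →
        {x : g | ∃ w : MvPolynomial κ F ⊗[F] g,
          (∀ h ∈ hI, εK ⁅TensorProduct.map toK.toLinearMap LinearMap.id w,
              ((1 : K) ⊗ₜ[F] h : K ⊗[F] g)⁆ = 0) ∧
          TensorProduct.lift ((LinearMap.lsmul F g).comp
              (MvPolynomial.aeval (fun k => α (bh k)) :
                MvPolynomial κ F →ₐ[F] F).toLinearMap) w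
            = MvPolynomial.eval (fun k => α (bh k)) q • x}
        = {x : g | ∀ h : ↥hI, α ⟨⁅x, (h : g)⁆, hI.lie_mem h.2⟩ = 0})) := by
  intro I₀ _hI₀ K _ _ toK hker hfrac εK hεK
  have parta : ∀ ξ : K ⊗[F] g,
      (∀ h ∈ hI, εK ⁅ξ, ((1 : K) ⊗ₜ[F] h : K ⊗[F] g)⁆ = 0) →
      ∀ w ∈ Submodule.span K {w : K ⊗[F] g | ∃ y ∈ hI, w = (1 : K) ⊗ₜ[F] y},
        ⁅ξ, w⁆ ∈ Submodule.span K
          {w : K ⊗[F] g | ∃ y ∈ hI, w = (1 : K) ⊗ₜ[F] y} := by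
    intro ξ _hξ w hw
    clear _hξ
    refine Submodule.span_induction ?_ ?_ ?_ ?_ hw
    · intro u hu
      obtain ⟨y, hy, rfl⟩ := hu
      induction ξ using TensorProduct.induction_on with
      | zero => rw [zero_lie]; exact Submodule.zero_mem _
      | tmul c z =>
          have hb : ⁅c ⊗ₜ[F] z, ((1 : K) ⊗ₜ[F] y : K ⊗[F] g)⁆
              = (c * 1) ⊗ₜ[F] ⁅z, y⁆ := rfl
          rw [hb, mul_one]
          have hsm : c ⊗ₜ[F] ⁅z, y⁆ = c • ((1 : K) ⊗ₜ[F] ⁅z, y⁆ : K ⊗[F] g) := by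
            rw [TensorProduct.smul_tmul', smul_eq_mul, mul_one]
          rw [hsm]
          exact Submodule.smul_mem _ c
            (Submodule.subset_span ⟨⁅z, y⁆, hI.lie_mem hy, rfl⟩)
      | add a d ha hd => rw [add_lie]; exact Submodule.add_mem _ ha hd
    · rw [lie_zero]; exact Submodule.zero_mem _
    · intro u v _ _ pu pv; rw [lie_add]; exact Submodule.add_mem _ pu pv
    · intro c u _ pu; rw [lie_smul]; exact Submodule.smul_mem _ c pu
  have partb : ∀ ξ : K ⊗[F] g,
      (∀ h ∈ hI, εK ⁅ξ, ((1 : K) ⊗ₜ[F] h : K ⊗[F] g)⁆ = 0) →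
      ∀ w ∈ Submodule.span K {w : K ⊗[F] g | ∃ y ∈ hI, w = (1 : K) ⊗ₜ[F] y}
          ⊓ LinearMap.ker εK,
        ⁅ξ, w⁆ ∈ Submodule.span K {w : K ⊗[F] g | ∃ y ∈ hI, w = (1 : K) ⊗ₜ[F] y}
          ⊓ LinearMap.ker εK := by
    intro ξ hξ w hw
    rw [Submodule.mem_inf] at hw ⊢
    refine ⟨parta ξ hξ w hw.1, ?_⟩
    set D : K ⊗[F] g →ₗ[K] K :=
      { toFun := fun u => εK ⁅ξ, u⁆
        map_add' := fun a c => by rw [lie_add, map_add]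
        map_smul' := fun c a => by rw [lie_smul, map_smul, RingHom.id_apply] }
      with hD
    have hspan : Submodule.span K {w : K ⊗[F] g | ∃ y ∈ hI, w = (1 : K) ⊗ₜ[F] y}
        ≤ LinearMap.ker D := by
      rw [Submodule.span_le]
      rintro u ⟨y, hy, rfl⟩
      exact LinearMap.mem_ker.mpr (hξ y hy)
    exact LinearMap.mem_ker.mp (hspan hw.1)
  refine ⟨parta, partb, ?_⟩
  set Mm : Matrix κ ι (MvPolynomial κ F) :=
    Matrix.of fun k i => linPoly bh (brIdeal hI (b i) (bh k)) with hMm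
  obtain ⟨s, hs, Bm, Hm, hMB, hBH⟩ :=
    matrix_splitting toK.toRingHom I₀ (fun f0 => hker f0) (fun x => hfrac x) Mm
  refine ⟨s, hs, fun α hα hq => ?_⟩
  set ev := MvPolynomial.eval (fun k => α (bh k)) with hev
  ext x
  simp only [Set.mem_setOf_eq]
  constructor
  · rintro ⟨w, hw1, hw2⟩ h
    have h1 := C1_lemma hI bh toK εK hεK h w
    have h2 : εK ⁅TensorProduct.map toK.toLinearMap LinearMap.id w,
        ((1 : K) ⊗ₜ[F] ((h : g)) : K ⊗[F] g)⁆ = 0 := hw1 (h : g) h.2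
    have h3 : Psi hI bh h w ∈ I₀ := (hker _).mp (h1.symm.trans h2)
    have h4 := hα _ h3
    rw [C2_lemma hI bh α h w, hw2, brIdeal_smul_left, map_smul, smul_eq_mul] at h4
    exact (mul_eq_zero.mp h4).resolve_left hq
  · intro hx
    set xc : ι → F := fun i => b.repr x i with hxc
    have hevM : ∀ k i, ev (Mm k i) = α (brIdeal hI (b i) (bh k)) := fun k i =>
      eval_linPoly bh α _
    have hxk : ∀ k, ∑ j, ev (Mm k j) * xc j = 0 := by
      intro k
      have e1 : α ((brL hI (bh k)) x) = 0 := hx (bh k)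
      have e2 : α ((brL hI (bh k)) x) = ∑ j, xc j * α (brIdeal hI (b j) (bh k)) := by
        conv_lhs => rw [← b.sum_repr x]
        rw [map_sum, map_sum]
        refine Finset.sum_congr rfl fun j _ => ?_
        rw [map_smul, map_smul, smul_eq_mul]
        rfl
      rw [Finset.sum_congr rfl fun j _ => by rw [hevM k j, mul_comm]]
      rw [← e2, e1]
    have hkey : ∀ i j, ev (Bm i j) + ∑ k, ev (Hm i k) * ev (Mm k j)
        = if i = j then ev s else 0 := by
      intro i j
      have h5 := hα _ (hBH i j)
      rw [map_sub, map_add, sub_eq_zero, Matrix.mul_apply, map_sum] at h5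
      simp only [map_mul] at h5
      rw [apply_ite ev, map_zero] at h5
      exact h5
    have hBid : ∀ i, ∑ j, ev (Bm i j) * xc j = ev s * xc i := by
      intro i
      have e3 : ∑ j, (ev (Bm i j) + ∑ k, ev (Hm i k) * ev (Mm k j)) * xc j
          = ev s * xc i := by
        rw [Finset.sum_congr rfl fun j _ => by rw [hkey i j]]
        simp [ite_mul, Finset.sum_ite_eq]
      have e4 : ∑ j, (∑ k, ev (Hm i k) * ev (Mm k j)) * xc j = 0 := by
        have : ∀ j, (∑ k, ev (Hm i k) * ev (Mm k j)) * xc j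
            = ∑ k, ev (Hm i k) * (ev (Mm k j) * xc j) := by
          intro j
          rw [Finset.sum_mul]
          exact Finset.sum_congr rfl fun k _ => by ring
        rw [Finset.sum_congr rfl fun j _ => this j, Finset.sum_comm]
        refine Finset.sum_eq_zero fun k _ => ?_
        rw [← Finset.mul_sum, hxk k, mul_zero]
      calc ∑ j, ev (Bm i j) * xc j
          = ∑ j, ((ev (Bm i j) + ∑ k, ev (Hm i k) * ev (Mm k j)) * xc j
              - (∑ k, ev (Hm i k) * ev (Mm k j)) * xc j) := by
            refine Finset.sum_congr rfl fun j _ => ?_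
            ring
        _ = ∑ j, (ev (Bm i j) + ∑ k, ev (Hm i k) * ev (Mm k j)) * xc j
              - ∑ j, (∑ k, ev (Hm i k) * ev (Mm k j)) * xc j :=
            Finset.sum_sub_distrib _ _
        _ = ev s * xc i := by rw [e3, e4, sub_zero]
    set p : ι → MvPolynomial κ F := fun i => ∑ j, xc j • Bm i j with hp
    refine ⟨∑ i, (p i) ⊗ₜ[F] (b i), ?_, ?_⟩
    · intro h hh
      have hgen : ∀ k, Psi hI bh (bh k) (∑ i, (p i) ⊗ₜ[F] (b i)) ∈ I₀ := by
        intro k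
        have hPsiw : Psi hI bh (bh k) (∑ i, (p i) ⊗ₜ[F] (b i))
            = ∑ j, xc j • ((Mm * Bm) k j) := by
          rw [map_sum]
          have t1 : ∀ i, Psi hI bh (bh k) ((p i) ⊗ₜ[F] (b i)) = p i * Mm k i :=
            fun i => Psi_tmul hI bh (bh k) (p i) (b i)
          rw [Finset.sum_congr rfl fun i _ => t1 i]
          have t2 : ∀ i, p i * Mm k i = ∑ j, xc j • (Mm k i * Bm i j) := by
            intro i
            rw [hp]
            dsimp only
            rw [Finset.sum_mul]
            refine Finset.sum_congr rfl fun j _ => ?_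
            rw [smul_mul_assoc, mul_comm (Bm i j) (Mm k i)]
          rw [Finset.sum_congr rfl fun i _ => t2 i, Finset.sum_comm]
          refine Finset.sum_congr rfl fun j _ => ?_
          rw [Matrix.mul_apply, Finset.smul_sum]
        rw [hPsiw]
        refine Ideal.sum_mem _ fun j _ => ?_
        rw [MvPolynomial.smul_eq_C_mul]
        exact Ideal.mul_mem_left _ _ (hMB k j)
      have hmem : Psi hI bh ⟨h, hh⟩ (∑ i, (p i) ⊗ₜ[F] (b i)) ∈ I₀ := by
        have hPL : Psi hI bh ⟨h, hh⟩ (∑ i, (p i) ⊗ₜ[F] (b i))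
            = PsiL hI bh (∑ i, (p i) ⊗ₜ[F] (b i)) ⟨h, hh⟩ := rfl
        rw [hPL, show (⟨h, hh⟩ : ↥hI) = ∑ k, bh.repr ⟨h, hh⟩ k • bh k from
          (bh.sum_repr _).symm, map_sum]
        refine Ideal.sum_mem _ fun k _ => ?_
        rw [map_smul, MvPolynomial.smul_eq_C_mul]
        exact Ideal.mul_mem_left _ _ (hgen k)
      exact (C1_lemma hI bh toK εK hεK ⟨h, hh⟩ _).trans ((hker _).mpr hmem)
    · rw [map_sum]
      have t3 : ∀ i, TensorProduct.lift ((LinearMap.lsmul F g).comp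
          (MvPolynomial.aeval (fun k => α (bh k)) :
            MvPolynomial κ F →ₐ[F] F).toLinearMap) ((p i) ⊗ₜ[F] (b i))
          = (ev (p i)) • b i := by
        intro i
        rw [TensorProduct.lift.tmul]
        simp only [LinearMap.comp_apply, AlgHom.toLinearMap_apply, LinearMap.lsmul_apply]
        rw [aeval_apply_eq_eval, hev]
      rw [Finset.sum_congr rfl fun i _ => t3 i]
      have t4 : ∀ i, ev (p i) = ev s * xc i := by
        intro i
        rw [hp]
        dsimp only
        rw [map_sum]
        have t5 : ∀ j, ev (xc j • Bm i j) = ev (Bm i j) * xc j := by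
          intro j
          rw [MvPolynomial.smul_eq_C_mul, map_mul]
          have : ev (MvPolynomial.C (xc j)) = xc j := MvPolynomial.eval_C _
          rw [this, mul_comm]
        rw [Finset.sum_congr rfl fun j _ => t5 j, hBid i]
      rw [Finset.sum_congr rfl fun i _ => by rw [t4 i, mul_smul]]
      rw [← Finset.smul_sum, b.sum_repr x]
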